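/- For every N ≥ 1 the half-time flow maps of the regularized solutions satisfy the renormalization-group relation ψ^(N+1) = R_g[ψ^(N)], i.e., ψ^(N+1)(a) = σ_−(ψ^(N)(ψ^(N)(σ_+(a)))) + ξ(a) for all a ∈ X^ℕ; moreover ψ^(1)(a) = (f(a_1, 0), 0, 0, …). -/

import Mathlib

open Filter Topology

namespace SSRG

variable {X : Type*}

/-- Upward shift map `σ₊(a) = (a₂, a₃, …)`. -/
def sigPlus (a : ℕ → X) : ℕ → X := fun i => a (i + 1)

/-- Downward shift map `σ₋(a) = (0, a₁, a₂, …)`. -/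
def sigMinus [Zero X] (a : ℕ → X) : ℕ → X := fun i =>
  match i with
  | 0 => 0
  | j + 1 => a j

/-- Coupling map `ξ(a) = (f(a₁,a₂), g(a₁,a₂), 0, 0, …)`. -/
def xiMap [Zero X] (f g : X → X → X) (a : ℕ → X) : ℕ → X := fun i =>
  match i with
  | 0 => f (a 0) (a 1)
  | 1 => g (a 0) (a 1)
  | _ + 2 => 0

/-- Boundary coupling map `β_b(a) = (g(b,a₁), 0, 0, …)`. -/
def betaMap [Zero X] (g : X → X → X) (b : X) (a : ℕ → X) : ℕ → X := fun i =>
  match i with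
  | 0 => g b (a 0)
  | _ + 1 => 0

/-- The renormalization group operator `R_g[ψ] = σ₋ ∘ ψ ∘ ψ ∘ σ₊ + ξ`. -/
def RGop [AddCommMonoid X] (f g : X → X → X) (ψ : (ℕ → X) → (ℕ → X)) :
    (ℕ → X) → (ℕ → X) :=
  fun a => sigMinus (ψ (ψ (sigPlus a))) + xiMap f g a

/-- The ideal equation at scale `n ≥ 1` and time `t = m·2⁻ⁿ`, `m ≥ 1`.
A field `u : ℕ → ℕ → X` records `u n m = uₙ(m·τₙ)`; row `0` is the boundary row,
`u 0 t = b_t` at integer times `t`. -/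
def IdealEq [AddCommMonoid X] (f g : X → X → X) (u : ℕ → ℕ → X) (n m : ℕ) : Prop :=
  if m % 2 = 1 then
    u n m = f (u n (m - 1)) (u (n + 1) (2 * (m - 1)))
  else
    u n m = f (u n (m - 1)) (u (n + 1) (2 * (m - 1))) +
      g (u (n - 1) ((m - 2) / 2)) (u n (m - 2))

/-- The regularized solution at regularization scale number `N`, with initial
conditions `a` (so `uₙ(0) = aₙ = a (n-1)` for `1 ≤ n ≤ N`) and boundary conditions
`b` (`u₀(t) = b t`): all variables at scales `n > N` vanish and the ideal equations
hold for `1 ≤ n ≤ N`. -/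
def IsRegSol [AddCommMonoid X] (f g : X → X → X) (N : ℕ) (a b : ℕ → X)
    (u : ℕ → ℕ → X) : Prop :=
  (∀ m, u 0 m = b m) ∧
  (∀ n, 1 ≤ n → n ≤ N → u n 0 = a (n - 1)) ∧
  (∀ n, N < n → ∀ m, u n m = 0) ∧
  (∀ n m, 1 ≤ n → n ≤ N → 1 ≤ m → IdealEq f g u n m)

/-- The state `u(1/2) = (u₁(1/2), u₂(1/2), …)` of a field. -/
def halfState (u : ℕ → ℕ → X) : ℕ → X := fun i => u (i + 1) (2 ^ i)

/-- The state `u(1) = (u₁(1), u₂(1), …)` of a field. -/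
def unitState (u : ℕ → ℕ → X) : ℕ → X := fun i => u (i + 1) (2 ^ (i + 1))

/-- The state `u(t) = (u₁(t), u₂(t), …)` of a field at an integer time `t`. -/
def intState (u : ℕ → ℕ → X) (t : ℕ) : ℕ → X := fun i => u (i + 1) (t * 2 ^ (i + 1))

/-- A weak solution of the ideal system: initial conditions `a`, boundary
conditions `b`, and the ideal equations at all points of the lattice. -/
def IsWeakSol [AddCommMonoid X] (f g : X → X → X) (a b : ℕ → X) (u : ℕ → ℕ → X) : Prop :=
  (∀ m, u 0 m = b m) ∧
  (∀ n, 1 ≤ n → u n 0 = a (n - 1)) ∧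
  (∀ n m, 1 ≤ n → 1 ≤ m → IdealEq f g u n m)

/-- Convergence of maps: `ψ N (a_N) → ψ∞ a` for every convergent sequence `a_N → a`
in `X^ℕ` with the product topology. -/
def MapConv [TopologicalSpace X] (ψ : ℕ → (ℕ → X) → (ℕ → X))
    (ψinf : (ℕ → X) → (ℕ → X)) : Prop :=
  ∀ (aN : ℕ → ℕ → X) (a : ℕ → X), Tendsto aN atTop (𝓝 a) →
    Tendsto (fun N => ψ N (aN N)) atTop (𝓝 (ψinf a))

theorem lemA {X : Type*} [AddCommMonoid X] (f g : X → X → X) (N : ℕ)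
    (a b b' : ℕ → X) (u v : ℕ → ℕ → X)
    (hu : IsRegSol f g (N + 1) a b u) (hv : IsRegSol f g N (sigPlus a) b' v) :
    ∀ n m, 1 ≤ n → m ≤ 2 ^ n → (n = 1 → m ≤ 1) → u (n + 1) m = v n m := by
  obtain ⟨hub, hua, huz, hue⟩ := hu
  obtain ⟨hvb, hva, hvz, hve⟩ := hv
  suffices h : ∀ k n m, m * 2 ^ (N - n) < k → 1 ≤ n → m ≤ 2 ^ n → (n = 1 → m ≤ 1) →
      u (n + 1) m = v n m by
    intro n m; exact h (m * 2 ^ (N - n) + 1) n m (Nat.lt_succ_self _)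
  intro k
  induction k with
  | zero => intro n m hk; omega
  | succ k ih =>
    intro n m hk hn hm h1
    by_cases hnN : N < n
    · rw [huz (n + 1) (by omega) m, hvz n hnN m]
    push_neg at hnN
    have hp : (0:ℕ) < 2 ^ (N - n) := Nat.pow_pos (by omega)
    match m with
    | 0 =>
      rw [hua (n + 1) (by omega) (by omega), hva n hn hnN]
      show a (n + 1 - 1) = a (n - 1 + 1)
      congr 1; omega
    | (m + 1) =>
      have hueq := hue (n + 1) (m + 1) (by omega) (by omega) (by omega)
      have hveq := hve n (m + 1) hn hnN (by omega)
      -- up-neighbor equality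
      have hup : u (n + 1 + 1) (2 * m) = v (n + 1) (2 * m) := by
        by_cases hN : n + 1 ≤ N
        · apply ih (n + 1) (2 * m) _ (by omega) (by rw [pow_succ]; omega) (by omega)
          have he : N - n = (N - (n + 1)) + 1 := by omega
          rw [he, pow_succ] at hk
          have : 2 * m * 2 ^ (N - (n + 1)) = m * 2 ^ (N - (n+1)) * 2 := by ring
          nlinarith [(Nat.pow_pos (show 0 < 2 by norm_num) : 0 < 2 ^ (N - (n+1)))]
        · rw [huz (n + 1 + 1) (by omega) _, hvz (n + 1) (by omega) _]
      have hside : u (n + 1) m = v n m := by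
        apply ih n m _ hn (by omega) (by omega)
        have hkk : (m + 1) * 2 ^ (N - n) ≤ k := by omega
        calc m * 2 ^ (N - n) < (m + 1) * 2 ^ (N - n) := (Nat.mul_lt_mul_right hp).mpr (by omega)
          _ ≤ k := hkk
      unfold IdealEq at hueq hveq
      by_cases hpar : (m + 1) % 2 = 1
      · rw [if_pos hpar] at hueq hveq
        simp only [Nat.add_sub_cancel] at hueq hveq
        rw [hueq, hveq, hside, hup]
      · rw [if_neg hpar] at hueq hveq
        simp only [Nat.add_sub_cancel] at hueq hveq
        -- m + 1 even, so m odd, m ≥ 1, and n ≥ 2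
        have hm1 : 1 ≤ m := by omega
        have hn2 : 2 ≤ n := by
          rcases Nat.lt_or_ge n 2 with h | h
          · exfalso; have := h1 (by omega); omega
          · exact h
        have hdown : u n ((m + 1 - 2) / 2) = v (n - 1) ((m + 1 - 2) / 2) := by
          have hmm : m + 1 - 2 = m - 1 := by omega
          rw [hmm]
          have hn1 : n - 1 + 1 = n := by omega
          rw [← hn1]
          apply ih (n - 1) ((m - 1) / 2) _ (by omega) ?_ ?_
          · -- measure
            have he : N - (n - 1) = (N - n) + 1 := by omega
            rw [he, pow_succ]
            have h2 : (m - 1) / 2 * (2 ^ (N - n) * 2) = ((m - 1) / 2 * 2) * 2 ^ (N - n) := by ring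
            rw [h2]
            have hev : (m - 1) / 2 * 2 ≤ m - 1 := Nat.div_mul_le_self _ _
            calc (m - 1) / 2 * 2 * 2 ^ (N - n) ≤ (m - 1) * 2 ^ (N - n) :=
                  Nat.mul_le_mul_right _ hev
              _ < (m + 1) * 2 ^ (N - n) := (Nat.mul_lt_mul_right hp).mpr (by omega)
              _ ≤ k := by omega
          · -- bound : (m-1)/2 ≤ 2^(n-1)
            have : n = (n - 1) + 1 := by omega
            rw [this] at hm
            rw [pow_succ] at hm
            omega
          · intro hne
            have : n = 2 := by omega
            subst this
            simp at hm ⊢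
            omega
        have hprev : u (n + 1) (m + 1 - 2) = v n (m + 1 - 2) := by
          have hmm : m + 1 - 2 = m - 1 := by omega
          rw [hmm]
          apply ih n (m - 1) _ hn (by omega) (by omega)
          have hkk : (m + 1) * 2 ^ (N - n) ≤ k := by omega
          calc (m - 1) * 2 ^ (N - n) < (m + 1) * 2 ^ (N - n) :=
                (Nat.mul_lt_mul_right hp).mpr (by omega)
            _ ≤ k := hkk
        rw [hueq, hveq, hside, hup, hdown, hprev]

theorem lemB {X : Type*} [AddCommMonoid X] (f g : X → X → X) (N : ℕ)
    (a' b' b'' : ℕ → X) (v w : ℕ → ℕ → X)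
    (hv : IsRegSol f g N a' b' v) (hw : IsRegSol f g N (halfState v) b'' w) :
    ∀ n m, 1 ≤ n → m ≤ 2 ^ (n - 1) → (n = 1 → m = 0) →
      w n m = v n (m + 2 ^ (n - 1)) := by
  obtain ⟨hvb, hva, hvz, hve⟩ := hv
  obtain ⟨hwb, hwa, hwz, hwe⟩ := hw
  suffices h : ∀ k n m, m * 2 ^ (N - n) < k → 1 ≤ n → m ≤ 2 ^ (n - 1) → (n = 1 → m = 0) →
      w n m = v n (m + 2 ^ (n - 1)) by
    intro n m; exact h (m * 2 ^ (N - n) + 1) n m (Nat.lt_succ_self _)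
  intro k
  induction k with
  | zero => intro n m hk; omega
  | succ k ih =>
    intro n m hk hn hm h1
    by_cases hnN : N < n
    · rw [hwz n hnN m, hvz n hnN _]
    push_neg at hnN
    have hp : (0:ℕ) < 2 ^ (N - n) := Nat.pow_pos (by omega)
    match m with
    | 0 =>
      rw [hwa n hn hnN]
      show v (n - 1 + 1) (2 ^ (n - 1)) = v n (0 + 2 ^ (n - 1))
      rw [zero_add]
      congr 1
      omega
    | (m + 1) =>
      have hn2 : 2 ≤ n := by omega
      have hE : 2 ^ (n - 1) = 2 * 2 ^ (n - 2) := by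
        rw [← pow_succ']; congr 1; omega
      have hEn : 2 ^ n = 2 * 2 ^ (n - 1) := by
        rw [← pow_succ']; congr 1; omega
      have hweq := hwe n (m + 1) hn hnN (by omega)
      have hveq := hve n (m + 1 + 2 ^ (n - 1)) hn hnN (by omega)
      have hkk : (m + 1) * 2 ^ (N - n) ≤ k := by omega
      have hside : w n m = v n (m + 2 ^ (n - 1)) := by
        apply ih n m ?_ hn (by omega) (by omega)
        calc m * 2 ^ (N - n) < (m + 1) * 2 ^ (N - n) :=
              (Nat.mul_lt_mul_right hp).mpr (by omega)
          _ ≤ k := hkk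
      have hup : w (n + 1) (2 * m) = v (n + 1) (2 * m + 2 ^ n) := by
        by_cases hN : n + 1 ≤ N
        · have := ih (n + 1) (2 * m) ?_ (by omega) (by simpa using by omega) (by omega)
          · simpa using this
          · have he : N - n = (N - (n + 1)) + 1 := by omega
            rw [he, pow_succ] at hkk
            calc 2 * m * 2 ^ (N - (n + 1)) = m * (2 ^ (N - (n+1)) * 2) := by ring
              _ < (m + 1) * (2 ^ (N - (n+1)) * 2) :=
                  (Nat.mul_lt_mul_right (by positivity)).mpr (by omega)
              _ ≤ k := hkk
        · rw [hwz (n + 1) (by omega) _, hvz (n + 1) (by omega) _]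
      unfold IdealEq at hweq hveq
      have hM1 : m + 1 + 2 ^ (n - 1) - 1 = m + 2 ^ (n - 1) := by omega
      have hM2 : 2 * (m + 2 ^ (n - 1)) = 2 * m + 2 ^ n := by omega
      simp only [Nat.add_sub_cancel, hM1] at hweq hveq
      rw [hM2] at hveq
      by_cases hpar : (m + 1) % 2 = 1
      · rw [if_pos hpar] at hweq
        rw [if_pos (by omega)] at hveq
        rw [hweq, hveq, hside, hup]
      · rw [if_neg hpar] at hweq
        rw [if_neg (by omega)] at hveq
        have hm1 : 1 ≤ m := by omega
        have hM3 : m + 1 + 2 ^ (n - 1) - 2 = m - 1 + 2 ^ (n - 1) := by omega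
        have hM4 : (m + 1 + 2 ^ (n - 1) - 2) / 2 = (m + 1 - 2) / 2 + 2 ^ (n - 2) := by omega
        have hM5 : m + 1 - 2 = m - 1 := by omega
        rw [hM4, hM3, hM5] at hveq
        rw [hM5] at hweq
        have hprev : w n (m - 1) = v n (m - 1 + 2 ^ (n - 1)) := by
          apply ih n (m - 1) ?_ hn (by omega) (by omega)
          calc (m - 1) * 2 ^ (N - n) < (m + 1) * 2 ^ (N - n) :=
                (Nat.mul_lt_mul_right hp).mpr (by omega)
            _ ≤ k := hkk
        have hnn' : (2:ℕ) ^ (n - 1 - 1) = 2 ^ (n - 2) := rfl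
        have h20 : n = 2 → (2:ℕ) ^ (n - 2) = 1 := by intro h; subst h; rfl
        have hdown : w (n - 1) ((m - 1) / 2) = v (n - 1) ((m - 1) / 2 + 2 ^ (n - 1 - 1)) := by
          apply ih (n - 1) ((m - 1) / 2) ?_ (by omega) (by rw [hnn']; omega) (by omega)
          have he : N - (n - 1) = (N - n) + 1 := by omega
          rw [he, pow_succ]
          calc (m - 1) / 2 * (2 ^ (N - n) * 2) = (m - 1) / 2 * 2 * 2 ^ (N - n) := by ring
            _ ≤ (m - 1) * 2 ^ (N - n) := Nat.mul_le_mul_right _ (Nat.div_mul_le_self _ _)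
            _ < (m + 1) * 2 ^ (N - n) := (Nat.mul_lt_mul_right hp).mpr (by omega)
            _ ≤ k := hkk
        have hnn : n - 1 - 1 = n - 2 := by omega
        rw [hnn] at hdown
        rw [hweq, hveq, hside, hup, hprev, hdown]

/-- For every `N ≥ 1` the half-time flow maps of the regularized
solutions satisfy the RG relation `ψ^{(N+1)} = R_g[ψ^{(N)}]`, i.e.
`ψ^{(N+1)}(a) = σ₋(ψ^{(N)}(ψ^{(N)}(σ₊(a)))) + ξ(a)` for all `a`; moreover
`ψ^{(1)}(a) = (f(a₁,0), 0, 0, …)`.  The half-time maps are expressed through the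
regularized solutions: `ψ^{(N+1)}(a) = halfState u` where `u` is the level-`N+1`
regularized solution from `a`; `ψ^{(N)}(σ₊ a) = halfState v` where `v` is the
level-`N` regularized solution from `σ₊ a`; and `ψ^{(N)}(ψ^{(N)}(σ₊ a)) =
halfState w` where `w` is the level-`N` regularized solution from `halfState v`
(half-time maps do not depend on the boundary conditions `b`, `b'`, `b''`). -/
theorem statement1 {X : Type*} [MetricSpace X] [CompleteSpace X]
    [TopologicalSpace.SeparableSpace X] [AddCommMonoid X] [ContinuousAdd X]
    (f g : X → X → X) (hf : Continuous fun p : X × X => f p.1 p.2)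
    (hg : Continuous fun p : X × X => g p.1 p.2) :
    (∀ (N : ℕ), 1 ≤ N → ∀ (a b b' b'' : ℕ → X) (u v w : ℕ → ℕ → X),
      IsRegSol f g (N + 1) a b u →
      IsRegSol f g N (sigPlus a) b' v →
      IsRegSol f g N (halfState v) b'' w →
      halfState u = sigMinus (halfState w) + xiMap f g a) ∧
    (∀ (a b : ℕ → X) (u : ℕ → ℕ → X), IsRegSol f g 1 a b u →
      halfState u = fun i => Nat.casesOn i (f (a 0) 0) fun _ => 0) := by
  constructor
  · intro N hN a b b' b'' u v w hu hv hw
    have hA := lemA f g N a b b' u v hu hv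
    have hB := lemB f g N (sigPlus a) b' b'' v w hv hw
    obtain ⟨hub, hua, huz, hue⟩ := hu
    obtain ⟨hvb, hva, hvz, hve⟩ := hv
    obtain ⟨hwb, hwa, hwz, hwe⟩ := hw
    funext i
    match i with
    | 0 =>
      show u 1 (2 ^ 0) = 0 + f (a 0) (a 1)
      have h := hue 1 1 (by omega) (by omega) (by omega)
      unfold IdealEq at h
      rw [if_pos rfl] at h
      norm_num at h ⊢
      rw [h, hua 1 (by omega) (by omega), hua 2 (by omega) (by omega)]
    | 1 =>
      show u 2 (2 ^ 1) = w 1 (2 ^ 0) + g (a 0) (a 1)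
      have h := hue 2 2 (by omega) (by omega) (by omega)
      unfold IdealEq at h
      rw [if_neg (by omega)] at h
      norm_num at h ⊢
      have hw11 := hwe 1 1 (by omega) (by omega) (by omega)
      unfold IdealEq at hw11
      rw [if_pos rfl] at hw11
      norm_num at hw11
      have h21 : u 2 1 = v 1 1 := hA 1 1 (by omega) (by omega) (by omega)
      have h32 : u 3 2 = v 2 2 := hA 2 2 (by omega) (by omega) (by omega)
      have h10 : w 1 0 = v 1 1 := by
        have := hB 1 0 (by omega) (by omega) (by omega)
        norm_num at this
        exact this
      have h20 : w 2 0 = v 2 2 := by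
        have := hB 2 0 (by omega) (by omega) (by omega)
        norm_num at this
        exact this
      rw [h, hw11, h21, h32, h10, h20, hua 1 (by omega) (by omega),
        hua 2 (by omega) (by omega)]
    | (j + 2) =>
      show u (j + 3) (2 ^ (j + 2)) = w (j + 2) (2 ^ (j + 1)) + 0
      rw [add_zero]
      have h1 : u (j + 3) (2 ^ (j + 2)) = v (j + 2) (2 ^ (j + 2)) :=
        hA (j + 2) (2 ^ (j + 2)) (by omega) le_rfl (by omega)
      have h2 : w (j + 2) (2 ^ (j + 1)) = v (j + 2) (2 ^ (j + 1) + 2 ^ (j + 2 - 1)) :=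
        hB (j + 2) (2 ^ (j + 1)) (by omega) le_rfl (by omega)
      have h3 : 2 ^ (j + 1) + 2 ^ (j + 2 - 1) = 2 ^ (j + 2) := by
        rw [pow_succ]
        show 2 ^ (j + 1) + 2 ^ (j + 1) = 2 ^ (j + 1) * 2
        ring
      rw [h1, h2, h3]
  · intro a b u hu
    obtain ⟨hub, hua, huz, hue⟩ := hu
    funext i
    match i with
    | 0 =>
      show u 1 (2 ^ 0) = f (a 0) 0
      have h := hue 1 1 (by omega) (by omega) (by omega)
      unfold IdealEq at h
      rw [if_pos rfl] at h
      norm_num at h ⊢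
      rw [h, hua 1 (by omega) (by omega), huz 2 (by omega) 0]
    | (j + 1) =>
      show u (j + 2) (2 ^ (j + 1)) = 0
      exact huz (j + 2) (by omega) _


end SSRG
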